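/- For every 0 < β ≤ log 4, the third derivative of c_β satisfies c_β'''(w) < 0 for all w > 0; consequently c_β' is strictly concave on (0, ∞). -/

import Mathlib

noncomputable section

/-- `c_β(t) = log[(1 + e^{−β}(e^t + e^{−t}))/(1 + 2e^{−β})]`. -/
def cBeta (β t : ℝ) : ℝ :=
  Real.log ((1 + Real.exp (-β) * (Real.exp t + Real.exp (-t))) / (1 + 2 * Real.exp (-β)))

namespace CBetaAux

open Real

def g1 (a t : ℝ) : ℝ := a * (exp t - exp (-t)) / (1 + a * (exp t + exp (-t)))
def g2 (a t : ℝ) : ℝ := (a * (exp t + exp (-t)) + 4 * a ^ 2) / (1 + a * (exp t + exp (-t))) ^ 2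
def g3 (a t : ℝ) : ℝ := a * (exp t - exp (-t)) * (1 - a * (exp t + exp (-t)) - 8 * a ^ 2)
    / (1 + a * (exp t + exp (-t))) ^ 3

lemma N_pos (a t : ℝ) (ha : 0 < a) : 0 < 1 + a * (exp t + exp (-t)) := by positivity

lemma hasDerivAt_N (a t : ℝ) :
    HasDerivAt (fun t => 1 + a * (exp t + exp (-t))) (a * (exp t - exp (-t))) t := by
  have h1 : HasDerivAt (fun t : ℝ => exp t) (exp t) t := Real.hasDerivAt_exp t
  have h2 : HasDerivAt (fun t : ℝ => exp (-t)) (-exp (-t)) t := by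
    have h := (Real.hasDerivAt_exp (-t)).comp t (hasDerivAt_neg t)
    simp at h
    exact h
  have := ((h1.add h2).const_mul a).const_add 1
  convert this using 1
  all_goals first | rfl | ring

lemma hasDerivAt_V (a t : ℝ) :
    HasDerivAt (fun t => a * (exp t - exp (-t))) (a * (exp t + exp (-t))) t := by
  have h1 : HasDerivAt (fun t : ℝ => exp t) (exp t) t := Real.hasDerivAt_exp t
  have h2 : HasDerivAt (fun t : ℝ => exp (-t)) (-exp (-t)) t := by
    have h := (Real.hasDerivAt_exp (-t)).comp t (hasDerivAt_neg t)
    simp at h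
    exact h
  have := ((h1.sub h2).const_mul a)
  convert this using 1
  all_goals first | rfl | ring

lemma xy_one (t : ℝ) : exp t * exp (-t) = 1 := by
  rw [← Real.exp_add]; simp

lemma hasDerivAt_cBeta (β t : ℝ) :
    HasDerivAt (cBeta β) (g1 (exp (-β)) t) t := by
  set a := exp (-β) with ha_def
  have ha : 0 < a := exp_pos _
  have hC : (0:ℝ) < 1 + 2 * a := by positivity
  have hfun : cBeta β = fun t => Real.log (1 + a * (exp t + exp (-t))) - Real.log (1 + 2 * a) := by
    funext t
    unfold cBeta
    rw [Real.log_div (ne_of_gt (N_pos a t ha)) (ne_of_gt hC)]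
  rw [hfun]
  have hN := hasDerivAt_N a t
  have hlog := hN.log (ne_of_gt (N_pos a t ha))
  simpa [g1, div_eq_mul_inv, mul_comm] using hlog.sub_const (Real.log (1 + 2 * a))

lemma hasDerivAt_g1 (a t : ℝ) (ha : 0 < a) :
    HasDerivAt (g1 a) (g2 a t) t := by
  have hN := hasDerivAt_N a t
  have hV := hasDerivAt_V a t
  have hNne := ne_of_gt (N_pos a t ha)
  have := hV.div hN hNne
  convert this using 1
  · rfl
  · rfl
  · rfl
  unfold g2
  have hxy := xy_one t
  field_simp
  nlinarith [hxy, sq_nonneg (exp t), sq_nonneg (exp (-t))]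

lemma hasDerivAt_g2 (a t : ℝ) (ha : 0 < a) :
    HasDerivAt (g2 a) (g3 a t) t := by
  have hN := hasDerivAt_N a t
  have hV := hasDerivAt_V a t
  have hNpos := N_pos a t ha
  have hNne := ne_of_gt hNpos
  have hP : HasDerivAt (fun t => a * (exp t + exp (-t)) + 4 * a ^ 2)
      (a * (exp t - exp (-t))) t := by
    simpa using (hasDerivAt_N a t).sub_const 1 |>.add_const (4 * a ^ 2)
  have hQ : HasDerivAt (fun t => (1 + a * (exp t + exp (-t))) ^ 2)
      (2 * (1 + a * (exp t + exp (-t))) * (a * (exp t - exp (-t)))) t := by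
    exact (hN.pow 2).congr_deriv (by norm_num)
  have hQne : (1 + a * (exp t + exp (-t))) ^ 2 ≠ 0 := pow_ne_zero _ hNne
  have := hP.div hQ hQne
  convert this using 1
  · rfl
  · rfl
  · rfl
  unfold g3
  field_simp
  ring

lemma deriv_cBeta (β : ℝ) : deriv (cBeta β) = g1 (exp (-β)) := by
  funext t; exact (hasDerivAt_cBeta β t).deriv

lemma deriv_g1 (a : ℝ) (ha : 0 < a) : deriv (g1 a) = g2 a := by
  funext t; exact (hasDerivAt_g1 a t ha).deriv

lemma deriv_g2 (a : ℝ) (ha : 0 < a) : deriv (g2 a) = g3 a := by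
  funext t; exact (hasDerivAt_g2 a t ha).deriv

lemma g3_neg (a w : ℝ) (ha : 1/4 ≤ a) (hw : 0 < w) : g3 a w < 0 := by
  have ha0 : 0 < a := lt_of_lt_of_le (by norm_num) ha
  set x := exp w with hx
  set y := exp (-w) with hy
  have hxy : x * y = 1 := xy_one w
  have hx0 : 0 < x := exp_pos _
  have hy0 : 0 < y := exp_pos _
  have hxgty : y < x := exp_lt_exp.2 (by linarith)
  have hsum : 2 < x + y := by nlinarith [sq_nonneg (x - y)]
  have hv : 0 < a * (x - y) := mul_pos ha0 (sub_pos.2 hxgty)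
  have hfac : 1 - a * (x + y) - 8 * a ^ 2 < 0 := by nlinarith
  have hD : 0 < (1 + a * (x + y)) ^ 3 := by positivity
  unfold g3
  exact div_neg_of_neg_of_pos (mul_neg_of_pos_of_neg hv hfac) hD

end CBetaAux

/-- For `0 < β ≤ log 4`, `c_β'''(w) < 0` for all `w > 0`; consequently
`c_β'` is strictly concave on `(0, ∞)`. -/
theorem cBeta_third_deriv_neg (β : ℝ) (hβ0 : 0 < β) (hβ : β ≤ Real.log 4) :
    (∀ w : ℝ, 0 < w → iteratedDeriv 3 (cBeta β) w < 0) ∧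
    StrictConcaveOn ℝ (Set.Ioi (0 : ℝ)) (deriv (cBeta β)) := by
  open CBetaAux Real in
  set a := Real.exp (-β) with ha_def
  have ha0 : 0 < a := Real.exp_pos _
  have ha14 : 1/4 ≤ a := by
    have : Real.exp (-Real.log 4) ≤ a := Real.exp_le_exp.2 (by linarith)
    rwa [Real.exp_neg, Real.exp_log (by norm_num : (0:ℝ) < 4), show (4:ℝ)⁻¹ = 1/4 by norm_num] at this
  have h3 : iteratedDeriv 3 (cBeta β) = g3 a := by
    rw [show (3:ℕ) = 2 + 1 from rfl, iteratedDeriv_succ,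
      show (2:ℕ) = 1 + 1 from rfl, iteratedDeriv_succ, iteratedDeriv_one,
      deriv_cBeta, deriv_g1 a ha0, deriv_g2 a ha0]
  constructor
  · intro w hw
    rw [h3]
    exact g3_neg a w ha14 hw
  · rw [deriv_cBeta]
    apply strictConcaveOn_of_deriv2_neg (convex_Ioi 0)
    · refine Continuous.continuousOn ?_
      unfold g1
      exact Continuous.div (by continuity) (by continuity)
        (fun t => ne_of_gt (N_pos a t ha0))
    · intro x hx
      rw [interior_Ioi] at hx
      have : deriv^[2] (g1 a) = g3 a := by
        rw [show (2:ℕ) = 1 + 1 from rfl, Function.iterate_succ_apply', Function.iterate_one,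
          deriv_g1 a ha0, deriv_g2 a ha0]
      rw [this]
      exact g3_neg a x ha14 hx
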